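/- For the two-degree-of-freedom Toda lattice with H = (p₁²+p₂²)/2 + e^{q₁−q₂}, the three functions I₁ = p₁+p₂, I₂ = (p₁−p₂)² + 4e^{q₁−q₂}, and I₃ = ((p₁−p₂+√I₂)/(p₁−p₂−√I₂))·exp(√I₂ (q₁+q₂)/(p₁+p₂)) are constants of motion, and H = (I₁² + I₂)/4. -/

import Mathlib

open Real

lemma toda_alg (a s e P Q X : ℝ) (hs : s^2 = a^2 + 4*e) (hP : P ≠ 0) (hd : a - s ≠ 0) :
    ((-e-e+0)*(a-s) - (a+s)*(-e-e-0))/(a-s)^2 * X +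
      (a+s)/(a-s) * (X * (((0*Q + s*P)*P - s*Q*0)/P^2)) = 0 := by
  have h2 : (a-s)^2 ≠ 0 := pow_ne_zero _ hd
  have h3 : P^2 ≠ 0 := pow_ne_zero _ hP
  field_simp
  linear_combination (-(X * P^2 * s)) * hs

lemma toda_aux_I2 (q₁ q₂ p₁ p₂ : ℝ → ℝ)
    (hq₁ : ∀ t, HasDerivAt q₁ (p₁ t) t)
    (hq₂ : ∀ t, HasDerivAt q₂ (p₂ t) t)
    (hp₁ : ∀ t, HasDerivAt p₁ (-Real.exp (q₁ t - q₂ t)) t)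
    (hp₂ : ∀ t, HasDerivAt p₂ (Real.exp (q₁ t - q₂ t)) t) (t : ℝ) :
    HasDerivAt (fun t => (p₁ t - p₂ t) ^ 2 + 4 * Real.exp (q₁ t - q₂ t)) 0 t := by
  have hu : HasDerivAt (fun t => p₁ t - p₂ t)
      (-Real.exp (q₁ t - q₂ t) - Real.exp (q₁ t - q₂ t)) t := (hp₁ t).sub (hp₂ t)
  have hE : HasDerivAt (fun t => Real.exp (q₁ t - q₂ t))
      (Real.exp (q₁ t - q₂ t) * (p₁ t - p₂ t)) t := ((hq₁ t).sub (hq₂ t)).exp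
  have h := (hu.pow 2).add (hE.const_mul 4)
  refine h.congr_deriv ?_
  ring

/-- For the two-particle Toda lattice
`H = (p₁² + p₂²)/2 + e^{q₁-q₂}`, the functions `I₁ = p₁ + p₂`,
`I₂ = (p₁-p₂)² + 4e^{q₁-q₂}`, and
`I₃ = ((p₁-p₂+√I₂)/(p₁-p₂-√I₂)) · exp(√I₂ (q₁+q₂)/(p₁+p₂))` are constants of motion
along Hamilton's flow (`I₃` on the region where `p₁+p₂ ≠ 0`, `I₂ > 0`,
`p₁-p₂ ≠ √I₂`), and `H = (I₁² + I₂)/4`. -/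
theorem toda_two_particles_superintegrable
    (q₁ q₂ p₁ p₂ : ℝ → ℝ)
    (hq₁ : ∀ t, HasDerivAt q₁ (p₁ t) t)
    (hq₂ : ∀ t, HasDerivAt q₂ (p₂ t) t)
    (hp₁ : ∀ t, HasDerivAt p₁ (-Real.exp (q₁ t - q₂ t)) t)
    (hp₂ : ∀ t, HasDerivAt p₂ (Real.exp (q₁ t - q₂ t)) t) :
    (∀ t, HasDerivAt (fun t => p₁ t + p₂ t) 0 t) ∧
    (∀ t, HasDerivAt
      (fun t => (p₁ t - p₂ t) ^ 2 + 4 * Real.exp (q₁ t - q₂ t)) 0 t) ∧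
    ((∀ t, p₁ t + p₂ t ≠ 0) →
      (∀ t, 0 < (p₁ t - p₂ t) ^ 2 + 4 * Real.exp (q₁ t - q₂ t)) →
      (∀ t, p₁ t - p₂ t ≠
        Real.sqrt ((p₁ t - p₂ t) ^ 2 + 4 * Real.exp (q₁ t - q₂ t))) →
      ∀ t, HasDerivAt (fun t =>
        ((p₁ t - p₂ t + Real.sqrt ((p₁ t - p₂ t) ^ 2 + 4 * Real.exp (q₁ t - q₂ t))) /
          (p₁ t - p₂ t - Real.sqrt ((p₁ t - p₂ t) ^ 2 + 4 * Real.exp (q₁ t - q₂ t)))) *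
        Real.exp (Real.sqrt ((p₁ t - p₂ t) ^ 2 + 4 * Real.exp (q₁ t - q₂ t)) *
          (q₁ t + q₂ t) / (p₁ t + p₂ t))) 0 t) ∧
    (∀ t, (p₁ t ^ 2 + p₂ t ^ 2) / 2 + Real.exp (q₁ t - q₂ t) =
      ((p₁ t + p₂ t) ^ 2 + ((p₁ t - p₂ t) ^ 2 + 4 * Real.exp (q₁ t - q₂ t))) / 4) := by
  have hI1 : ∀ t, HasDerivAt (fun t => p₁ t + p₂ t) 0 t := by
    intro t
    have h := (hp₁ t).add (hp₂ t)
    refine h.congr_deriv ?_; ring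
  refine ⟨hI1, fun t => toda_aux_I2 q₁ q₂ p₁ p₂ hq₁ hq₂ hp₁ hp₂ t, ?_, fun t => by ring⟩
  intro h1 h2 h3 t
  have hI2 := toda_aux_I2 q₁ q₂ p₁ p₂ hq₁ hq₂ hp₁ hp₂ t
  have hpos := h2 t
  have hne : (p₁ t - p₂ t) ^ 2 + 4 * Real.exp (q₁ t - q₂ t) ≠ 0 := ne_of_gt hpos
  have hsqrt : HasDerivAt
      (fun t => Real.sqrt ((p₁ t - p₂ t) ^ 2 + 4 * Real.exp (q₁ t - q₂ t))) 0 t := by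
    have h := (Real.hasDerivAt_sqrt hne).comp t hI2
    exact h.congr_deriv (by simp)
  have hu : HasDerivAt (fun t => p₁ t - p₂ t)
      (-Real.exp (q₁ t - q₂ t) - Real.exp (q₁ t - q₂ t)) t := (hp₁ t).sub (hp₂ t)
  have hnum := hu.add hsqrt
  have hden := hu.sub hsqrt
  have hden_ne : p₁ t - p₂ t -
      Real.sqrt ((p₁ t - p₂ t) ^ 2 + 4 * Real.exp (q₁ t - q₂ t)) ≠ 0 :=
    sub_ne_zero.mpr (h3 t)
  have hR := hnum.div hden hden_ne
  have hQ : HasDerivAt (fun t => q₁ t + q₂ t) (p₁ t + p₂ t) t := (hq₁ t).add (hq₂ t)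
  have harg := ((hsqrt.mul hQ).div (hI1 t) (h1 t)).exp
  have h := hR.mul harg
  refine h.congr_deriv ?_
  have hsq : Real.sqrt ((p₁ t - p₂ t) ^ 2 + 4 * Real.exp (q₁ t - q₂ t)) ^ 2 =
      (p₁ t - p₂ t) ^ 2 + 4 * Real.exp (q₁ t - q₂ t) := Real.sq_sqrt hpos.le
  exact (toda_alg (p₁ t - p₂ t)
    (Real.sqrt ((p₁ t - p₂ t) ^ 2 + 4 * Real.exp (q₁ t - q₂ t)))
    (Real.exp (q₁ t - q₂ t)) (p₁ t + p₂ t) (q₁ t + q₂ t)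
    (Real.exp (Real.sqrt ((p₁ t - p₂ t) ^ 2 + 4 * Real.exp (q₁ t - q₂ t)) *
      (q₁ t + q₂ t) / (p₁ t + p₂ t))) hsq (h1 t) hden_ne)
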